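/- Let M be an indecomposable right R-module and N a nonsingular right R-module. If M ⊕ N is a SIP-CS module, then every nonzero homomorphism from M to N is a monomorphism. -/

import Mathlib

universe u v w

section Defs

variable {S : Type u} [Ring S]

/-- A submodule `A` is a direct summand of `M`. -/
def IsDirectSummand {M : Type v} [AddCommGroup M] [Module S M] (A : Submodule S M) : Prop :=
  ∃ B : Submodule S M, A ⊓ B = ⊥ ∧ A ⊔ B = ⊤

/-- `A` is an essential submodule of `B`. -/
def IsEssentialIn {M : Type v} [AddCommGroup M] [Module S M] (A B : Submodule S M) : Prop :=
  A ≤ B ∧ ∀ K : Submodule S M, K ≤ B → K ≠ ⊥ → A ⊓ K ≠ ⊥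

/-- `A` is essential in some direct summand of `M`. -/
def EssentialInSummand {M : Type v} [AddCommGroup M] [Module S M] (A : Submodule S M) : Prop :=
  ∃ D : Submodule S M, IsDirectSummand D ∧ IsEssentialIn A D

/-- `A` is a small (superfluous) submodule of `M`. -/
def IsSmallSubmodule {M : Type v} [AddCommGroup M] [Module S M] (A : Submodule S M) : Prop :=
  ∀ K : Submodule S M, A ⊔ K = ⊤ → K = ⊤

/-- `A` lies above the direct summand `D` of `M`, i.e. `D ≤ A` and `A/D` is small in `M/D`. -/
def LiesAbove {M : Type v} [AddCommGroup M] [Module S M] (A D : Submodule S M) : Prop :=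
  IsDirectSummand D ∧ D ≤ A ∧ IsSmallSubmodule (Submodule.map D.mkQ A)

/-- `A` lies above some direct summand of `M`. -/
def LiesAboveSummand {M : Type v} [AddCommGroup M] [Module S M] (A : Submodule S M) : Prop :=
  ∃ D : Submodule S M, LiesAbove A D

end Defs

section ModDefs

variable (S : Type u) [Ring S]

/-- SSP: the sum of any two direct summands is a direct summand. -/
def HasSSP (M : Type v) [AddCommGroup M] [Module S M] : Prop :=
  ∀ A B : Submodule S M, IsDirectSummand A → IsDirectSummand B → IsDirectSummand (A ⊔ B)

/-- SIP: the intersection of any two direct summands is a direct summand. -/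
def HasSIP (M : Type v) [AddCommGroup M] [Module S M] : Prop :=
  ∀ A B : Submodule S M, IsDirectSummand A → IsDirectSummand B → IsDirectSummand (A ⊓ B)

/-- SIP-CS: the intersection of any finite family of direct summands is essential in a
direct summand. -/
def IsSIPCS (M : Type v) [AddCommGroup M] [Module S M] : Prop :=
  ∀ (ι : Type) [Fintype ι] (A : ι → Submodule S M),
    (∀ i, IsDirectSummand (A i)) → EssentialInSummand (⨅ i, A i)

/-- SSP-lifting: if each member of a finite family of submodules lies above a direct summand,
then their sum lies above a direct summand. -/
def IsSSPLifting (M : Type v) [AddCommGroup M] [Module S M] : Prop :=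
  ∀ (ι : Type) [Fintype ι] (A : ι → Submodule S M),
    (∀ i, LiesAboveSummand (A i)) → LiesAboveSummand (⨆ i, A i)

/-- C2 condition: every submodule isomorphic to a direct summand is a direct summand. -/
def HasC2 (M : Type v) [AddCommGroup M] [Module S M] : Prop :=
  ∀ A B : Submodule S M, IsDirectSummand B → Nonempty (A ≃ₗ[S] B) → IsDirectSummand A

/-- C3 condition: the sum of two direct summands with zero intersection is a direct summand. -/
def HasC3 (M : Type v) [AddCommGroup M] [Module S M] : Prop :=
  ∀ A B : Submodule S M, IsDirectSummand A → IsDirectSummand B → A ⊓ B = ⊥ →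
    IsDirectSummand (A ⊔ B)

/-- D2 condition: if `M/A` is isomorphic to a direct summand of `M` then `A` is a direct
summand. -/
def HasD2 (M : Type v) [AddCommGroup M] [Module S M] : Prop :=
  ∀ A : Submodule S M, (∃ B : Submodule S M, IsDirectSummand B ∧
    Nonempty ((M ⧸ A) ≃ₗ[S] B)) → IsDirectSummand A

/-- D3 condition: if two direct summands sum to `M`, their intersection is a direct summand. -/
def IsD3Module (M : Type v) [AddCommGroup M] [Module S M] : Prop :=
  ∀ A B : Submodule S M, IsDirectSummand A → IsDirectSummand B → A ⊔ B = ⊤ →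
    IsDirectSummand (A ⊓ B)

/-- `M` is relatively CS-Rickart to `N`. -/
def RelCSRickart (M : Type v) (N : Type w) [AddCommGroup M] [Module S M]
    [AddCommGroup N] [Module S N] : Prop :=
  ∀ φ : M →ₗ[S] N, EssentialInSummand (LinearMap.ker φ)

/-- `M` is relatively d-CS-Rickart to `N`. -/
def RelDCSRickart (M : Type v) (N : Type w) [AddCommGroup M] [Module S M]
    [AddCommGroup N] [Module S N] : Prop :=
  ∀ φ : N →ₗ[S] M, LiesAboveSummand (LinearMap.range φ)

/-- CS-Rickart module. -/
def IsCSRickart (M : Type v) [AddCommGroup M] [Module S M] : Prop :=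
  RelCSRickart S M M

/-- d-CS-Rickart module. -/
def IsDCSRickart (M : Type v) [AddCommGroup M] [Module S M] : Prop :=
  RelDCSRickart S M M

/-- `M` has an `Ω`-cover, where `Ω` is the class of modules satisfying `P`. -/
def HasCover (P : ModuleCat.{v} S → Prop) (M : Type v) [AddCommGroup M] [Module S M] : Prop :=
  ∃ (E : ModuleCat.{v} S) (g : E →ₗ[S] M), P E ∧
    (∀ (E' : ModuleCat.{v} S), P E' → ∀ g' : E' →ₗ[S] M,
      ∃ h : E' →ₗ[S] E, g ∘ₗ h = g') ∧
    (∀ h : E →ₗ[S] E, g ∘ₗ h = g → Function.Bijective h)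

/-- `M` has an `Ω`-envelope, where `Ω` is the class of modules satisfying `P`. -/
def HasEnvelope (P : ModuleCat.{v} S → Prop) (M : Type v) [AddCommGroup M] [Module S M] : Prop :=
  ∃ (E : ModuleCat.{v} S) (g : M →ₗ[S] E), P E ∧
    (∀ (E' : ModuleCat.{v} S), P E' → ∀ g' : M →ₗ[S] E',
      ∃ h : E →ₗ[S] E', h ∘ₗ g = g') ∧
    (∀ h : E →ₗ[S] E, h ∘ₗ g = g → Function.Bijective h)

/-- `M` is 2-generated. -/
def TwoGenerated (M : Type v) [AddCommGroup M] [Module S M] : Prop :=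
  ∃ a b : M, Submodule.span S ({a, b} : Set M) = ⊤

/-- `M` is finitely cogenerated. -/
def FinitelyCogenerated (M : Type v) [AddCommGroup M] [Module S M] : Prop :=
  ∀ 𝒜 : Set (Submodule S M), sInf 𝒜 = ⊥ →
    ∃ ℬ ⊆ 𝒜, ℬ.Finite ∧ sInf ℬ = ⊥

/-- The socle of `M`: the sum of all simple submodules. -/
def SocleOf (M : Type v) [AddCommGroup M] [Module S M] : Submodule S M :=
  sSup {A : Submodule S M | IsSimpleModule S ↥A}

/-- An indecomposable module: nonzero, and its only direct summands are `0` and itself. -/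
def IsIndecomposable (M : Type v) [AddCommGroup M] [Module S M] : Prop :=
  (⊤ : Submodule S M) ≠ ⊥ ∧
    ∀ A : Submodule S M, IsDirectSummand A → A = ⊥ ∨ A = ⊤

end ModDefs

section RingDefs

variable (R : Type u) [Ring R]

/-- The right annihilator of an element of a right `R`-module, as a right ideal of `R`. -/
def rightAnnihilator {M : Type v} [AddCommGroup M] [Module Rᵐᵒᵖ M] (m : M) :
    Submodule Rᵐᵒᵖ R where
  carrier := {r : R | MulOpposite.op r • m = 0}
  add_mem' := by
    intro a b ha hb
    simp only [Set.mem_setOf_eq] at *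
    rw [MulOpposite.op_add, add_smul, ha, hb, add_zero]
  zero_mem' := by simp
  smul_mem' := by
    intro c x hx
    simp only [Set.mem_setOf_eq] at *
    have : MulOpposite.op (c • x) = c * MulOpposite.op x := by
      rw [MulOpposite.smul_eq_mul_unop]
      simp [MulOpposite.op_mul]
    rw [this, mul_smul, hx, smul_zero]

/-- `M` is a nonsingular right `R`-module. -/
def IsNonsingular (M : Type v) [AddCommGroup M] [Module Rᵐᵒᵖ M] : Prop :=
  ∀ m : M, IsEssentialIn (rightAnnihilator R m) (⊤ : Submodule Rᵐᵒᵖ R) → m = 0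

/-- `R` is a right V-ring: every simple right `R`-module is injective. -/
def IsRightVRing : Prop :=
  ∀ (N : Type u) [AddCommGroup N] [Module Rᵐᵒᵖ N],
    IsSimpleModule Rᵐᵒᵖ N → Module.Injective Rᵐᵒᵖ N

/-- `R` is semiregular: `R/J(R)` is von Neumann regular and idempotents lift modulo `J(R)`. -/
def IsSemiregularRing : Prop :=
  (∀ a : R, ∃ b : R, a - a * b * a ∈ Ideal.jacobson (⊥ : Ideal R) ∧ b = b * a * b) ∧
  (∀ a : R, a * a - a ∈ Ideal.jacobson (⊥ : Ideal R) →
    ∃ e : R, e * e = e ∧ e - a ∈ Ideal.jacobson (⊥ : Ideal R))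

end RingDefs

section Aux

variable {R : Type u} [Ring R] {M : Type v} [AddCommGroup M] [Module Rᵐᵒᵖ M]

/-- The map `r ↦ op r • d`, `Rᵐᵒᵖ`-linear from `R` to `M`. -/
def smulMapAux (d : M) : R →ₗ[Rᵐᵒᵖ] M where
  toFun r := MulOpposite.op r • d
  map_add' a b := by
    show MulOpposite.op (a + b) • d = MulOpposite.op a • d + MulOpposite.op b • d
    rw [MulOpposite.op_add, add_smul]
  map_smul' x r := by
    show MulOpposite.op (x • r) • d = x • MulOpposite.op r • d
    have : MulOpposite.op (x • r) = x * MulOpposite.op r := by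
      rw [MulOpposite.smul_eq_mul_unop]
      simp [MulOpposite.op_mul]
    rw [this, mul_smul]

lemma essential_mono_aux {A B C : Submodule Rᵐᵒᵖ M} (h : IsEssentialIn A C)
    (hAB : A ≤ B) (hBC : B ≤ C) : IsEssentialIn B C := by
  refine ⟨hBC, fun K hKC hK hBK => ?_⟩
  exact h.2 K hKC hK (by rw [← le_bot_iff] at hBK ⊢; exact le_trans (inf_le_inf_right K hAB) hBK)

/-- If `A` is essential in `D` and `d ∈ D`, then the right ideal `{r | op r • d ∈ A}`
is essential in `R`. -/
lemma essential_ideal_aux {A D : Submodule Rᵐᵒᵖ M} (hAD : IsEssentialIn A D)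
    {d : M} (hd : d ∈ D) :
    IsEssentialIn (Submodule.comap (smulMapAux d) A) (⊤ : Submodule Rᵐᵒᵖ R) := by
  refine ⟨le_top, fun K _ hK hIK => ?_⟩
  by_cases hall : ∀ k ∈ K, MulOpposite.op k • d = 0
  · -- then K ≤ I, so I ⊓ K = K ≠ ⊥
    have hKI : K ≤ Submodule.comap (smulMapAux d) A := by
      intro k hk
      show MulOpposite.op k • d ∈ A
      rw [hall k hk]; exact A.zero_mem
    rw [inf_eq_right.mpr hKI] at hIK
    exact hK hIK
  · push_neg at hall
    obtain ⟨k₀, hk₀K, hk₀⟩ := hall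
    set L : Submodule Rᵐᵒᵖ M := K.map (smulMapAux d) with hL
    have hLD : L ≤ D := by
      rintro x ⟨r, _, rfl⟩
      exact D.smul_mem _ hd
    have hLne : L ≠ ⊥ := by
      intro hbot
      have : MulOpposite.op k₀ • d ∈ L := ⟨k₀, hk₀K, rfl⟩
      rw [hbot, Submodule.mem_bot] at this
      exact hk₀ this
    have hAL := hAD.2 L hLD hLne
    rw [Submodule.ne_bot_iff] at hAL
    obtain ⟨x, hx, hxne⟩ := hAL
    obtain ⟨hxA, k, hkK, hkx⟩ := hx
    have : k ∈ Submodule.comap (smulMapAux d) A ⊓ K := by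
      refine ⟨?_, hkK⟩
      show MulOpposite.op k • d ∈ A
      rw [show (smulMapAux d) k = MulOpposite.op k • d from rfl] at hkx
      rw [hkx]; exact hxA
    rw [hIK, Submodule.mem_bot] at this
    apply hxne
    rw [← hkx, this]
    simp [smulMapAux]

end Aux

/-- if `M` is indecomposable, `N` is nonsingular and `M ⊕ N` is SIP-CS, then
every nonzero homomorphism `M → N` is a monomorphism. -/
theorem statement_17 (R : Type u) [Ring R] (M N : Type v)
    [AddCommGroup M] [Module Rᵐᵒᵖ M] [AddCommGroup N] [Module Rᵐᵒᵖ N]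
    (hM : IsIndecomposable Rᵐᵒᵖ M) (hN : IsNonsingular R N)
    (h : IsSIPCS Rᵐᵒᵖ (M × N)) (f : M →ₗ[Rᵐᵒᵖ] N) (hf : f ≠ 0) :
    Function.Injective f := by
  rw [← LinearMap.ker_eq_bot]
  by_contra hker
  classical
  set P : Submodule Rᵐᵒᵖ (M × N) := Submodule.prod ⊤ ⊥ with hPdef
  set G : Submodule Rᵐᵒᵖ (M × N) := LinearMap.graph f with hGdef
  set Q : Submodule Rᵐᵒᵖ (M × N) := Submodule.prod ⊥ ⊤ with hQdef
  have hP : IsDirectSummand P := by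
    refine ⟨Q, ?_, ?_⟩
    · ext ⟨m, n⟩
      simp [hPdef, hQdef, Prod.ext_iff]
    · rw [eq_top_iff]
      rintro ⟨m, n⟩ -
      rw [Submodule.mem_sup]
      exact ⟨(m, 0), by simp [hPdef], (0, n), by simp [hQdef], by simp⟩
  have hG : IsDirectSummand G := by
    refine ⟨Q, ?_, ?_⟩
    · rw [eq_bot_iff]
      rintro ⟨m, n⟩ hmem
      obtain ⟨h1, h2⟩ := Submodule.mem_inf.mp hmem
      have hm : m = 0 := by simpa using (Submodule.mem_prod.mp h2).1
      have hn : n = f m := by rw [LinearMap.mem_graph_iff] at h1; exact h1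
      subst hm
      simp only [map_zero] at hn
      simp [Prod.ext_iff, hn]
    · rw [eq_top_iff]
      rintro ⟨m, n⟩ -
      rw [Submodule.mem_sup]
      refine ⟨(m, f m), by rw [LinearMap.mem_graph_iff], (0, n - f m), by simp [hQdef], by simp⟩
  -- apply SIP-CS to the pair P, G
  have hfam : ∀ b : Bool, IsDirectSummand ((fun b : Bool => if b then P else G) b) := by
    intro b
    cases b
    · simpa using hG
    · simpa using hP
  obtain ⟨D, ⟨D', hDD'1, hDD'2⟩, hess⟩ := h Bool (fun b => if b then P else G) hfam
  have hinf : (⨅ b : Bool, if b then P else G) = P ⊓ G := by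
    rw [iInf_bool_eq]; simp
  rw [hinf] at hess
  set A : Submodule Rᵐᵒᵖ (M × N) := Submodule.prod (LinearMap.ker f) ⊥ with hAdef
  have hPG : P ⊓ G = A := by
    ext ⟨m, n⟩
    constructor
    · intro hmem
      obtain ⟨h1, h2⟩ := Submodule.mem_inf.mp hmem
      have hn : n = 0 := by simpa using (Submodule.mem_prod.mp h1).2
      have hgr : n = f m := by rw [LinearMap.mem_graph_iff] at h2; exact h2
      refine Submodule.mem_prod.mpr ⟨?_, by simpa using hn⟩
      show m ∈ LinearMap.ker f
      rw [LinearMap.mem_ker, ← hgr, hn]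
    · intro hmem
      obtain ⟨h1, h2⟩ := Submodule.mem_prod.mp hmem
      have hn : n = 0 := by simpa using h2
      refine Submodule.mem_inf.mpr ⟨Submodule.mem_prod.mpr ⟨trivial, by simpa using hn⟩, ?_⟩
      rw [LinearMap.mem_graph_iff]
      show n = f m
      rw [hn]
      exact (LinearMap.mem_ker.mp h1).symm
  rw [hPG] at hess
  -- D ≤ P, using nonsingularity of N
  have hDP : D ≤ P := by
    rintro ⟨m, n⟩ hmn
    have hI := essential_ideal_aux hess hmn
    have hIann : Submodule.comap (smulMapAux (m, n)) A ≤ rightAnnihilator R n := by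
      intro r hr
      simp only [Submodule.mem_comap] at hr
      have hmem : MulOpposite.op r • (m, n) ∈ A := hr
      rw [hAdef] at hmem
      obtain ⟨-, h2⟩ := Submodule.mem_prod.mp hmem
      exact (by simpa using h2 : MulOpposite.op r • n = 0)
    have hn0 := hN n (essential_mono_aux hI hIann le_top)
    rw [hPdef]
    exact Submodule.mem_prod.mpr ⟨trivial, by simpa using hn0⟩
  -- pass to submodules of M
  set DM : Submodule Rᵐᵒᵖ M := D.map (LinearMap.fst Rᵐᵒᵖ M N) with hDM
  set C : Submodule Rᵐᵒᵖ (M × N) := D' ⊓ P with hC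
  set CM : Submodule Rᵐᵒᵖ M := C.map (LinearMap.fst Rᵐᵒᵖ M N) with hCM
  have hmemDM : ∀ x : M, x ∈ DM ↔ (x, (0 : N)) ∈ D := by
    intro x
    constructor
    · rintro ⟨⟨m, n⟩, hmn, rfl⟩
      have hp := hDP hmn
      rw [hPdef] at hp
      obtain ⟨-, h2⟩ := Submodule.mem_prod.mp hp
      simp only [Submodule.mem_bot] at h2
      subst h2
      exact hmn
    · intro hx
      exact ⟨(x, 0), hx, rfl⟩
  have hmemCM : ∀ x : M, x ∈ CM ↔ (x, (0 : N)) ∈ C := by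
    intro x
    constructor
    · rintro ⟨⟨m, n⟩, hmn, rfl⟩
      have hp := (Submodule.mem_inf.mp hmn).2
      rw [hPdef] at hp
      obtain ⟨-, h2⟩ := Submodule.mem_prod.mp hp
      simp only [Submodule.mem_bot] at h2
      subst h2
      exact hmn
    · intro hx
      exact ⟨(x, 0), hx, rfl⟩
  have hDCsup : D ⊔ C = P := by
    rw [hC, ← sup_inf_assoc_of_le _ hDP, hDD'2, top_inf_eq]
  have hDMsummand : IsDirectSummand DM := by
    refine ⟨CM, ?_, ?_⟩
    · rw [eq_bot_iff]
      intro x hx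
      obtain ⟨h1, h2⟩ := Submodule.mem_inf.mp hx
      rw [hmemDM] at h1
      rw [hmemCM] at h2
      have : (x, (0 : N)) ∈ D ⊓ D' :=
        Submodule.mem_inf.mpr ⟨h1, (Submodule.mem_inf.mp h2).1⟩
      rw [hDD'1, Submodule.mem_bot, Prod.ext_iff] at this
      simpa using this.1
    · rw [eq_top_iff]
      intro x _
      have : (x, (0 : N)) ∈ D ⊔ C := by
        rw [hDCsup, hPdef]
        exact Submodule.mem_prod.mpr ⟨trivial, by simp⟩
      rw [Submodule.mem_sup] at this
      obtain ⟨d, hd, c, hc, hdc⟩ := this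
      have hd2 : d.2 = 0 := by
        have hp := hDP hd
        rw [hPdef] at hp
        simpa using (Submodule.mem_prod.mp hp).2
      have hc2 : c.2 = 0 := by
        have hp := (Submodule.mem_inf.mp hc).2
        rw [hPdef] at hp
        simpa using (Submodule.mem_prod.mp hp).2
      rw [Submodule.mem_sup]
      refine ⟨d.1, ?_, c.1, ?_, ?_⟩
      · rw [hmemDM, ← hd2]; exact hd
      · rw [hmemCM, ← hc2]; exact hc
      · have := congrArg Prod.fst hdc
        simpa using this
  -- indecomposability
  rcases hM.2 DM hDMsummand with hbot | htop
  · -- DM = ⊥ contradicts ker f ≠ ⊥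
    obtain ⟨k, hk, hkne⟩ := (Submodule.ne_bot_iff _).mp hker
    have : (k, (0 : N)) ∈ A := by
      rw [hAdef]; exact Submodule.mem_prod.mpr ⟨hk, by simp⟩
    have hkD : (k, (0 : N)) ∈ D := hess.1 this
    have : k ∈ DM := (hmemDM k).mpr hkD
    rw [hbot, Submodule.mem_bot] at this
    exact hkne this
  · -- DM = ⊤ gives D = P, hence f = 0
    have hDeqP : D = P := by
      refine le_antisymm hDP ?_
      rintro ⟨m, n⟩ hmn
      rw [hPdef] at hmn
      obtain ⟨-, h2⟩ := Submodule.mem_prod.mp hmn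
      simp only [Submodule.mem_bot] at h2
      subst h2
      have : m ∈ DM := by rw [htop]; trivial
      exact (hmemDM m).mp this
    apply hf
    ext m
    have hmD : (m, (0 : N)) ∈ D := by
      rw [hDeqP, hPdef]
      exact Submodule.mem_prod.mpr ⟨trivial, by simp⟩
    have hI := essential_ideal_aux hess hmD
    have hIann : Submodule.comap (smulMapAux (m, (0 : N))) A ≤ rightAnnihilator R (f m) := by
      intro r hr
      simp only [Submodule.mem_comap] at hr
      have hmem : MulOpposite.op r • (m, (0 : N)) ∈ A := hr
      rw [hAdef] at hmem
      obtain ⟨h1, -⟩ := Submodule.mem_prod.mp hmem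
      have hfz : f (MulOpposite.op r • m) = 0 := by simpa using h1
      rw [map_smul] at hfz
      exact hfz
    have := hN (f m) (essential_mono_aux hI hIann le_top)
    simpa using this
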